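/- arXiv:2004.08663 — 5 statements merged into one kernel-verified Lean document; each statement's English description precedes it below -/
import Mathlib

section
/- The function λ(t) = (1/6)·ln((λ₀/U₀)·(tanh(√(3λ₀)(t-t₀))² - 1)) satisfies 3(λ'(t))² - U₀·e^{6λ(t)} = λ₀ for all t where it is defined, assuming λ₀ > 0 and λ₀/U₀·(tanh²-1) > 0 on the domain. -/
/-- λ(t) = (1/6)·ln((λ₀/U₀)(tanh²(√(3λ₀)(t-t₀)) - 1)) satisfies
3(λ')² - U₀e^{6λ} = λ₀ wherever the argument of the logarithm is positive. -/
theorem stmt_2 (lam₀ U₀ t₀ : ℝ) (hlam₀ : 0 < lam₀) (hU₀ : U₀ < 0)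
    (l : ℝ → ℝ)
    (hl : ∀ t, l t = (1/6) * Real.log ((lam₀ / U₀) *
      ((Real.tanh (Real.sqrt (3 * lam₀) * (t - t₀)))^2 - 1))) :
    ∀ t, 0 < (lam₀ / U₀) * ((Real.tanh (Real.sqrt (3 * lam₀) * (t - t₀)))^2 - 1) →
      3 * (deriv l t)^2 - U₀ * Real.exp (6 * l t) = lam₀ := by
  intro t ht
  set a := Real.sqrt (3 * lam₀) with ha
  have ha2 : a ^ 2 = 3 * lam₀ := Real.sq_sqrt (by positivity)
  have hcosh : ∀ s : ℝ, Real.cosh s ≠ 0 := fun s => (Real.cosh_pos (x := s)).ne'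
  have hUne : U₀ ≠ 0 := hU₀.ne
  -- rewrite the argument of the log
  have harg : ∀ s : ℝ, (lam₀ / U₀) * ((Real.tanh (a * (s - t₀)))^2 - 1)
      = (lam₀ / (-U₀)) / (Real.cosh (a * (s - t₀)))^2 := by
    intro s
    have hs : Real.sinh (a * (s - t₀)) ^ 2 = Real.cosh (a * (s - t₀)) ^ 2 - 1 :=
      Real.sinh_sq _
    rw [Real.tanh_eq_sinh_div_cosh]
    have hc := hcosh (a * (s - t₀))
    field_simp
    linear_combination hs
  -- closed form for l
  have hleq : l = fun s => (1/6) * Real.log (lam₀ / (-U₀))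
      - (1/3) * Real.log (Real.cosh (a * (s - t₀))) := by
    funext s
    have hU' : (0:ℝ) < lam₀ / (-U₀) := div_pos hlam₀ (by linarith)
    rw [hl s, harg s, Real.log_div hU'.ne' (pow_ne_zero 2 (hcosh _)),
      Real.log_pow]
    push_cast
    ring
  -- derivative
  have hd : HasDerivAt l (-(a/3) * Real.tanh (a * (t - t₀))) t := by
    rw [hleq]
    have h1 : HasDerivAt (fun s : ℝ => a * (s - t₀)) a t := by
      simpa using ((hasDerivAt_id t).sub_const t₀).const_mul a
    have h2 : HasDerivAt (fun s : ℝ => Real.cosh (a * (s - t₀)))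
        (Real.sinh (a * (t - t₀)) * a) t := (Real.hasDerivAt_cosh _).comp t h1
    have h3 : HasDerivAt (fun s : ℝ => Real.log (Real.cosh (a * (s - t₀))))
        (Real.sinh (a * (t - t₀)) * a / Real.cosh (a * (t - t₀))) t :=
      h2.log (hcosh _)
    have := (h3.const_mul (1/3 : ℝ)).const_sub ((1/6) * Real.log (lam₀ / (-U₀)))
    refine this.congr_deriv ?_
    rw [Real.tanh_eq_sinh_div_cosh]
    field_simp
  rw [hd.deriv]
  have hexp : Real.exp (6 * l t)
      = (lam₀ / U₀) * ((Real.tanh (a * (t - t₀)))^2 - 1) := by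
    rw [hl t]
    rw [show (6 : ℝ) * ((1/6) * Real.log ((lam₀ / U₀) *
      ((Real.tanh (a * (t - t₀)))^2 - 1))) = Real.log ((lam₀ / U₀) *
      ((Real.tanh (a * (t - t₀)))^2 - 1)) by ring]
    exact Real.exp_log ht
  rw [hexp]
  have hU : U₀ * (lam₀ / U₀) = lam₀ := by field_simp
  set T := Real.tanh (a * (t - t₀))
  linear_combination (T^2/3) * ha2 + (1 - T^2) * hU
end

section
/- The functions x(τ) = c₁e^{-3τ} - (μ+2)/√6, Σ₊(τ) = c₂e^{-3τ}, z(τ) = 6/(2√6·c₁(μ+2)e^{-3τ} + 6c₃e^{-6τ} - μ² - 4μ + 2) satisfy the system x' = -√(3/2)(μ+2) - 3x, Σ₊' = -3Σ₊, z' = -z[z(√6(μ+2)x + 6) - 6] on any interval where the denominator of z is nonzero. -/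
/-- The explicit functions x, Σ₊, z solve the alternative system wherever the
denominator of z is nonzero. -/
theorem stmt_13 (μ c₁ c₂ c₃ : ℝ)
    (x Sp z D : ℝ → ℝ)
    (hx : ∀ τ, x τ = c₁ * Real.exp (-3 * τ) - (μ + 2) / Real.sqrt 6)
    (hSp : ∀ τ, Sp τ = c₂ * Real.exp (-3 * τ))
    (hD : ∀ τ, D τ = 2 * Real.sqrt 6 * c₁ * (μ + 2) * Real.exp (-3 * τ)
        + 6 * c₃ * Real.exp (-6 * τ) - μ^2 - 4 * μ + 2)
    (hz : ∀ τ, z τ = 6 / D τ) :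
    ∀ τ, D τ ≠ 0 →
      HasDerivAt x (-Real.sqrt (3/2) * (μ + 2) - 3 * x τ) τ ∧
      HasDerivAt Sp (-3 * Sp τ) τ ∧
      HasDerivAt z (-(z τ) * (z τ * (Real.sqrt 6 * (μ + 2) * x τ + 6) - 6)) τ := by
  intro τ hτ
  have hxf : x = fun t => c₁ * Real.exp (-3 * t) - (μ + 2) / Real.sqrt 6 := funext hx
  have hSpf : Sp = fun t => c₂ * Real.exp (-3 * t) := funext hSp
  have hDf : D = fun t => 2 * Real.sqrt 6 * c₁ * (μ + 2) * Real.exp (-3 * t)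
        + 6 * c₃ * Real.exp (-6 * t) - μ^2 - 4 * μ + 2 := funext hD
  have hzf : z = fun t => 6 / D t := funext hz
  have h6 : (0:ℝ) < Real.sqrt 6 := Real.sqrt_pos.mpr (by norm_num)
  have hsq : Real.sqrt 6 * Real.sqrt 6 = 6 := Real.mul_self_sqrt (by norm_num)
  have hsq2 : Real.sqrt (3/2) * Real.sqrt 6 = 3 := by
    rw [← Real.sqrt_mul (by norm_num)]
    rw [show (3:ℝ)/2 * 6 = 9 by norm_num]
    rw [show (9:ℝ) = 3^2 by norm_num, Real.sqrt_sq (by norm_num)]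
  -- derivative of exp(-3 t)
  have he3 : HasDerivAt (fun t : ℝ => Real.exp (-3 * t)) (-3 * Real.exp (-3 * τ)) τ := by
    have := ((hasDerivAt_id τ).const_mul (-3 : ℝ)).exp
    simpa [mul_comm] using this
  have he6 : HasDerivAt (fun t : ℝ => Real.exp (-6 * t)) (-6 * Real.exp (-6 * τ)) τ := by
    have := ((hasDerivAt_id τ).const_mul (-6 : ℝ)).exp
    simpa [mul_comm] using this
  refine ⟨?_, ?_, ?_⟩
  · rw [hxf]
    have h := (he3.const_mul c₁).sub_const ((μ + 2) / Real.sqrt 6)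
    refine h.congr_deriv (Eq.symm ?_)
    beta_reduce
    have h32 : Real.sqrt (3/2) = 3 / Real.sqrt 6 := by
      rw [eq_div_iff h6.ne']; exact hsq2
    rw [h32]
    field_simp
    linear_combination
  · rw [hSpf]
    have h := he3.const_mul c₂
    refine h.congr_deriv (Eq.symm ?_)
    beta_reduce
    ring
  · have hD' : HasDerivAt D (-6 * Real.sqrt 6 * c₁ * (μ + 2) * Real.exp (-3 * τ)
        - 36 * c₃ * Real.exp (-6 * τ)) τ := by
      rw [hDf]
      have h := ((((he3.const_mul (2 * Real.sqrt 6 * c₁ * (μ + 2))).add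
        (he6.const_mul (6 * c₃))).sub_const (μ^2)).sub_const (4*μ)).add_const 2
      refine h.congr_deriv (Eq.symm ?_)
      ring
    rw [hzf]
    have h := (hasDerivAt_const τ (6:ℝ)).div hD' hτ
    refine h.congr_deriv (Eq.symm ?_)
    beta_reduce
    have key : 6 * (Real.sqrt 6 * (μ + 2) * x τ + 6) - 6 * D τ
        = -6 * Real.sqrt 6 * c₁ * (μ + 2) * Real.exp (-3 * τ)
          - 36 * c₃ * Real.exp (-6 * τ) := by
      have hdiv : (μ + 2) / Real.sqrt 6 = (μ + 2) * Real.sqrt 6 / 6 := by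
        rw [div_eq_div_iff h6.ne' (by norm_num : (6:ℝ) ≠ 0)]
        linear_combination (-(μ + 2)) * hsq
      have hx' : x τ = c₁ * Real.exp (-3 * τ) - (μ + 2) * Real.sqrt 6 / 6 := by
        rw [hx, hdiv]
      rw [hx', hD]
      linear_combination (-(μ + 2)^2) * hsq
    rw [← key]
    field_simp
    ring
end

section
/- The point P_B = (x,Σ₊,z) = (-(μ+2)/√6, 0, -6/(μ(μ+4)-2)) is an equilibrium point of the system x' = -√(3/2)(μ+2)-3x, Σ₊' = -3Σ₊, z' = -z[z(√6(μ+2)x+6)-6], and the Jacobian there has eigenvalues -6, -3, -3; hence P_B is a hyperbolic sink. -/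
open Polynomial

lemma deriv_quadratic (a b c x : ℝ) :
    deriv (fun s : ℝ => a * s ^ 2 + b * s + c) x = 2 * a * x + b := by
  have h1 : HasDerivAt (fun s : ℝ => s ^ 2) (2 * x) x := by
    simpa using hasDerivAt_pow 2 x
  have h2 : HasDerivAt (fun s : ℝ => b * s) b x := by
    simpa using (hasDerivAt_id x).const_mul b
  have := (((h1.const_mul a).add h2).add_const c).deriv
  exact this.trans (by ring)

/-- P_B = (-(μ+2)/√6, 0, -6/(μ(μ+4)-2)) is an equilibrium of the alternative
system and the Jacobian there has eigenvalues -6, -3, -3; hence it is a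
hyperbolic sink (all eigenvalues negative). -/
theorem stmt_14 (μ : ℝ) (hμ : μ * (μ + 4) ≠ 2)
    (f : (Fin 3 → ℝ) → Fin 3 → ℝ)
    (hf : ∀ v, f v = ![
      -Real.sqrt (3/2) * (μ + 2) - 3 * v 0,
      -3 * v 1,
      -(v 2) * (v 2 * (Real.sqrt 6 * (μ + 2) * v 0 + 6) - 6)])
    (p : Fin 3 → ℝ)
    (hp : p = ![-(μ + 2) / Real.sqrt 6, 0, -6 / (μ * (μ + 4) - 2)])
    (J : Matrix (Fin 3) (Fin 3) ℝ)
    (hJ : ∀ i j, J i j = deriv (fun s => f (Function.update p j s) i) (p j)) :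
    f p = 0 ∧ J.charpoly = (X + C 6) * (X + C 3) * (X + C 3) ∧
      ((-6:ℝ) < 0 ∧ (-3:ℝ) < 0) := by
  have h6 : (0:ℝ) < Real.sqrt 6 := Real.sqrt_pos.mpr (by norm_num)
  have h6ne : Real.sqrt 6 ≠ 0 := ne_of_gt h6
  have hs : Real.sqrt (3/2) * Real.sqrt 6 = 3 := by
    rw [← Real.sqrt_mul (by norm_num)]
    rw [show (3:ℝ)/2 * 6 = 9 by norm_num]
    rw [show (9:ℝ) = 3^2 by norm_num, Real.sqrt_sq (by norm_num)]
  have h62 : Real.sqrt 6 * Real.sqrt 6 = 6 := Real.mul_self_sqrt (by norm_num)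
  have hd : μ * (μ + 4) - 2 ≠ 0 := sub_ne_zero.mpr hμ
  -- key simplification at the point
  have hx : Real.sqrt 6 * (μ + 2) * (-(μ + 2) / Real.sqrt 6) = -(μ + 2)^2 := by
    field_simp
  have hK : Real.sqrt 6 * (μ + 2) * (-(μ + 2) / Real.sqrt 6) + 6
      = -(μ * (μ + 4) - 2) := by rw [hx]; ring
  have hzK : (-6 / (μ * (μ + 4) - 2)) *
      (Real.sqrt 6 * (μ + 2) * (-(μ + 2) / Real.sqrt 6) + 6) = 6 := by
    rw [hK]; field_simp
  refine ⟨?_, ?_, by norm_num, by norm_num⟩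
  · have h32 : Real.sqrt (3/2) = 3 / Real.sqrt 6 := by
      rw [eq_div_iff h6ne]; exact hs
    have hp0 : p 0 = -(μ + 2) / Real.sqrt 6 := by rw [hp]; rfl
    have hp1 : p 1 = 0 := by rw [hp]; rfl
    have hp2 : p 2 = -6 / (μ * (μ + 4) - 2) := by rw [hp]; rfl
    have hfp0 : f p 0 = -Real.sqrt (3/2) * (μ + 2) - 3 * p 0 := by rw [hf]; rfl
    have hfp1 : f p 1 = -3 * p 1 := by rw [hf]; rfl
    have hfp2 : f p 2
        = -(p 2) * (p 2 * (Real.sqrt 6 * (μ + 2) * p 0 + 6) - 6) := by rw [hf]; rfl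
    funext i
    fin_cases i
    · show f p 0 = (0 : Fin 3 → ℝ) 0
      rw [hfp0, hp0, h32]
      field_simp
      simp
    · show f p 1 = (0 : Fin 3 → ℝ) 1
      rw [hfp1, hp1]; simp
    · show f p 2 = (0 : Fin 3 → ℝ) 2
      rw [hfp2, hp0, hp2, hzK]
      norm_num
  · -- compute the Jacobian entries
    have e00 : J 0 0 = -3 := by
      rw [hJ]
      have : (fun s => f (Function.update p 0 s) 0)
          = fun s : ℝ => 0 * s ^ 2 + (-3) * s + (-Real.sqrt (3/2) * (μ + 2)) := by
        funext s; simp [hf, Function.update]; ring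
      rw [this, deriv_quadratic]; ring
    have e01 : J 0 1 = 0 := by
      rw [hJ]
      have : (fun s => f (Function.update p 1 s) 0)
          = fun _ : ℝ => -Real.sqrt (3/2) * (μ + 2) - 3 * p 0 := by
        funext s; simp [hf, Function.update]
      rw [this, deriv_const]
    have e02 : J 0 2 = 0 := by
      rw [hJ]
      have : (fun s => f (Function.update p 2 s) 0)
          = fun _ : ℝ => -Real.sqrt (3/2) * (μ + 2) - 3 * p 0 := by
        funext s; simp [hf, Function.update]
      rw [this, deriv_const]
    have e10 : J 1 0 = 0 := by
      rw [hJ]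
      have : (fun s => f (Function.update p 0 s) 1) = fun _ : ℝ => -3 * p 1 := by
        funext s; simp [hf, Function.update]
      rw [this, deriv_const]
    have e11 : J 1 1 = -3 := by
      rw [hJ]
      have : (fun s => f (Function.update p 1 s) 1)
          = fun s : ℝ => 0 * s ^ 2 + (-3) * s + 0 := by
        funext s; simp [hf, Function.update]
      rw [this, deriv_quadratic]; ring
    have e12 : J 1 2 = 0 := by
      rw [hJ]
      have : (fun s => f (Function.update p 2 s) 1) = fun _ : ℝ => -3 * p 1 := by
        funext s; simp [hf, Function.update]
      rw [this, deriv_const]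
    have e21 : J 2 1 = 0 := by
      rw [hJ]
      have : (fun s => f (Function.update p 1 s) 2)
          = fun _ : ℝ => -(p 2) * (p 2 * (Real.sqrt 6 * (μ + 2) * p 0 + 6) - 6) := by
        funext s; simp [hf, Function.update]
      rw [this, deriv_const]
    have e22 : J 2 2 = -6 := by
      rw [hJ]
      have : (fun s => f (Function.update p 2 s) 2)
          = fun s : ℝ => (-(Real.sqrt 6 * (μ + 2) * p 0 + 6)) * s ^ 2 + 6 * s + 0 := by
        funext s; simp [hf, Function.update]; ring
      rw [this, deriv_quadratic]
      have hp2 : p 2 = -6 / (μ * (μ + 4) - 2) := by rw [hp]; rfl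
      have hp0 : p 0 = -(μ + 2) / Real.sqrt 6 := by rw [hp]; rfl
      rw [hp2, hp0]
      have : 2 * -(Real.sqrt 6 * (μ + 2) * (-(μ + 2) / Real.sqrt 6) + 6) *
          (-6 / (μ * (μ + 4) - 2)) = -12 := by
        have := hzK
        nlinarith [hzK]
      rw [this]; ring
    have e20 : ∃ a : ℝ, J 2 0 = a := ⟨_, rfl⟩
    obtain ⟨a, e20⟩ := e20
    rw [Matrix.charpoly, Matrix.det_fin_three]
    simp [Matrix.charmatrix_apply_eq, Matrix.charmatrix_apply_ne, e00, e01, e02, e10, e11, e12, e21, e22, e20]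
    ring
end

section
/- The point P_C = (-(μ+2)/√6, 0, 0) is an equilibrium of the system x' = -√(3/2)(μ+2)-3x, Σ₊' = -3Σ₊, z' = -z[z(√6(μ+2)x+6)-6], and the Jacobian at P_C has eigenvalues 6, -3, -3; hence P_C is a saddle. -/
open Polynomial

lemma sqrt32_eq : Real.sqrt (3/2) = 3 / Real.sqrt 6 := by
  rw [eq_div_iff (by positivity), ← Real.sqrt_mul (by norm_num)]
  norm_num

lemma deriv_lin (a x : ℝ) : deriv (fun s : ℝ => a - 3 * s) x = -3 := by
  simpa using (((hasDerivAt_id x).const_mul 3).const_sub a).deriv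

lemma deriv_mul3 : deriv (HMul.hMul (3:ℝ)) (0:ℝ) = 3 := by
  show deriv (fun s : ℝ => 3 * s) 0 = 3
  simpa using ((hasDerivAt_id (0:ℝ)).const_mul 3).deriv

/-- P_C = (-(μ+2)/√6, 0, 0) is an equilibrium of the alternative system and the
Jacobian there has eigenvalues 6, -3, -3; hence P_C is a saddle (eigenvalues of
both signs). -/
theorem stmt_15 (μ : ℝ)
    (f : (Fin 3 → ℝ) → Fin 3 → ℝ)
    (hf : ∀ v, f v = ![
      -Real.sqrt (3/2) * (μ + 2) - 3 * v 0,
      -3 * v 1,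
      -(v 2) * (v 2 * (Real.sqrt 6 * (μ + 2) * v 0 + 6) - 6)])
    (p : Fin 3 → ℝ)
    (hp : p = ![-(μ + 2) / Real.sqrt 6, 0, 0])
    (J : Matrix (Fin 3) (Fin 3) ℝ)
    (hJ : ∀ i j, J i j = deriv (fun s => f (Function.update p j s) i) (p j)) :
    f p = 0 ∧ J.charpoly = (X - C 6) * (X + C 3) * (X + C 3) ∧
      ((0:ℝ) < 6 ∧ (-3:ℝ) < 0) := by
  have h6 : Real.sqrt 6 ≠ 0 := by positivity
  refine ⟨?_, ?_, by norm_num⟩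
  · funext i
    have s36 : Real.sqrt 3 * Real.sqrt 6 = 3 * Real.sqrt 2 := by
      rw [← Real.sqrt_mul (by norm_num), show (3:ℝ)*6 = 3^2*2 by norm_num,
        Real.sqrt_mul (by positivity), Real.sqrt_sq (by norm_num)]
    fin_cases i <;> simp [hf, hp]
    field_simp
    linear_combination (-μ - 2) * s36
  · have hJ' : J = Matrix.diagonal ![(-3:ℝ), -3, 6] := by
      funext i j
      fin_cases i <;> fin_cases j <;>
        simp only [hJ, hf, hp, Function.update, Matrix.diagonal] <;>
        simp <;>
        first
          | exact deriv_lin _ _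
          | exact deriv_mul3
    rw [hJ', Matrix.charpoly, Matrix.det_fin_three]
    simp [Matrix.charmatrix_apply_eq, Matrix.charmatrix_apply_ne, Matrix.diagonal]
    ring
end

section
/- The functions x₁(τ)=c₁e^{-3τ}-(μ+2)/√6-x_A, x₂(τ)=c₂e^{-3τ}-Σ_{+A}, x₃(τ)=√(2√6c₁(μ+2)e^{-3τ}+6c₃e^{-6τ}-μ²-4μ+2)/√6 satisfy the rescaled center-manifold system x₁' = (1/2)(-√6(μ+2)-6x₁-6x_A), x₂' = -3x₂-3Σ_{+A}, x₃' = (√6(μ+2)x₁+√6(μ+2)x_A - 6x₃² + 6)/(2x₃), on any interval where the radicand is positive. -/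
lemma aux17a (μ xA c₁ a E : ℝ) (ha : a^2 = 6) (ha0 : 0 < a) :
    (1/2) * (-a * (μ + 2) - 6 * (c₁ * E - (μ + 2) / a - xA) - 6 * xA)
      = c₁ * (-3 * E) := by
  have ha' := ha0.ne'
  field_simp
  linear_combination (-(μ + 2)) * ha

lemma aux17b (μ xA c₁ c₃ E F a s : ℝ) (ha : a^2 = 6) (ha0 : 0 < a) (hs0 : 0 < s)
    (hs : s^2 = 2*a*c₁*(μ+2)*E + 6*c₃*F - μ^2 - 4*μ + 2) :
    (a*(μ+2)*(c₁*E - (μ+2)/a - xA) + a*(μ+2)*xA - 6*(s/a)^2 + 6)/(2*(s/a))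
      = (2*a*c₁*(μ+2)*(-3*E) + 6*c₃*(-6*F))/(2*s)/a := by
  have ha' := ha0.ne'
  have hs' := hs0.ne'
  rw [div_div, div_eq_div_iff (by positivity) (by positivity)]
  field_simp
  linear_combination (a*(μ+2)*c₁*E - (μ+2)^2 + 6) * ha - 6 * hs

/-- The explicit functions x₁, x₂, x₃ satisfy the rescaled center-manifold
system wherever the radicand is positive. -/
theorem stmt_17 (μ xA SpA c₁ c₂ c₃ : ℝ)
    (x₁ x₂ x₃ R : ℝ → ℝ)
    (hR : ∀ τ, R τ = 2 * Real.sqrt 6 * c₁ * (μ + 2) * Real.exp (-3 * τ)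
        + 6 * c₃ * Real.exp (-6 * τ) - μ^2 - 4 * μ + 2)
    (hx₁ : ∀ τ, x₁ τ = c₁ * Real.exp (-3 * τ) - (μ + 2) / Real.sqrt 6 - xA)
    (hx₂ : ∀ τ, x₂ τ = c₂ * Real.exp (-3 * τ) - SpA)
    (hx₃ : ∀ τ, x₃ τ = Real.sqrt (R τ) / Real.sqrt 6) :
    ∀ τ, 0 < R τ →
      HasDerivAt x₁ ((1/2) * (-Real.sqrt 6 * (μ + 2) - 6 * x₁ τ - 6 * xA)) τ ∧
      HasDerivAt x₂ (-3 * x₂ τ - 3 * SpA) τ ∧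
      HasDerivAt x₃ ((Real.sqrt 6 * (μ + 2) * x₁ τ + Real.sqrt 6 * (μ + 2) * xA
          - 6 * (x₃ τ)^2 + 6) / (2 * x₃ τ)) τ := by
  have hR' := funext hR
  have hx₁' := funext hx₁
  have hx₂' := funext hx₂
  have hx₃' := funext hx₃
  subst hR' hx₁' hx₂' hx₃'
  intro τ hpos
  have hs6 : (0:ℝ) < Real.sqrt 6 := Real.sqrt_pos.mpr (by norm_num)
  have hs6sq : Real.sqrt 6 ^ 2 = 6 := Real.sq_sqrt (by norm_num)
  set Rτ := 2 * Real.sqrt 6 * c₁ * (μ + 2) * Real.exp (-3 * τ)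
        + 6 * c₃ * Real.exp (-6 * τ) - μ^2 - 4 * μ + 2 with hRdef
  have hsR : (0:ℝ) < Real.sqrt Rτ := Real.sqrt_pos.mpr hpos
  have hsRsq : Real.sqrt Rτ ^ 2 = Rτ := Real.sq_sqrt hpos.le
  have hexp3 : HasDerivAt (fun τ : ℝ => Real.exp (-3 * τ))
      (-3 * Real.exp (-3 * τ)) τ := by
    have h := ((hasDerivAt_id τ).const_mul (-3 : ℝ)).exp
    simpa [mul_comm] using h
  have hexp6 : HasDerivAt (fun τ : ℝ => Real.exp (-6 * τ))
      (-6 * Real.exp (-6 * τ)) τ := by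
    have h := ((hasDerivAt_id τ).const_mul (-6 : ℝ)).exp
    simpa [mul_comm] using h
  refine ⟨?_, ?_, ?_⟩
  · have h := ((hexp3.const_mul c₁).sub_const ((μ + 2) / Real.sqrt 6)).sub_const xA
    refine h.congr_deriv ?_
    exact (aux17a μ xA c₁ (Real.sqrt 6) (Real.exp (-3 * τ)) hs6sq hs6).symm
  · have h := (hexp3.const_mul c₂).sub_const SpA
    refine h.congr_deriv ?_
    ring
  · have hRd : HasDerivAt (fun τ : ℝ => 2 * Real.sqrt 6 * c₁ * (μ + 2) * Real.exp (-3 * τ)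
        + 6 * c₃ * Real.exp (-6 * τ) - μ^2 - 4 * μ + 2)
        (2 * Real.sqrt 6 * c₁ * (μ + 2) * (-3 * Real.exp (-3 * τ))
          + 6 * c₃ * (-6 * Real.exp (-6 * τ))) τ := by
      have h := ((((hexp3.const_mul (2 * Real.sqrt 6 * c₁ * (μ + 2))).add
        (hexp6.const_mul (6 * c₃))).sub_const (μ^2)).sub_const (4 * μ)).add_const 2
      exact h
    have hsq : HasDerivAt (fun τ : ℝ => Real.sqrt (2 * Real.sqrt 6 * c₁ * (μ + 2) * Real.exp (-3 * τ)
        + 6 * c₃ * Real.exp (-6 * τ) - μ^2 - 4 * μ + 2))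
        ((2 * Real.sqrt 6 * c₁ * (μ + 2) * (-3 * Real.exp (-3 * τ))
          + 6 * c₃ * (-6 * Real.exp (-6 * τ))) / (2 * Real.sqrt Rτ)) τ :=
      hRd.sqrt (ne_of_gt hpos)
    have h := hsq.div_const (Real.sqrt 6)
    refine h.congr_deriv ?_
    exact (aux17b μ xA c₁ c₃ (Real.exp (-3 * τ)) (Real.exp (-6 * τ))
      (Real.sqrt 6) (Real.sqrt Rτ) hs6sq hs6 hsR hsRsq).symm
end
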